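/- (Balanced diameter for mode switching on the circle.) Let A and B be finite subsets of the unit circle in ℝ² with |A| = |B| = N ≥ 1, such that all points of A ∪ B are pairwise distinct and no two points of A ∪ B are antipodal. Then there exists a unit vector u ∈ ℝ² such that ⟨u, q⟩ ≠ 0 for every q ∈ A ∪ B and the number of points a ∈ A with ⟨u, a⟩ > 0 equals the number of points b ∈ B with ⟨u, b⟩ > 0. -/

import Mathlib

open Matrix

/-- The Euclidean norm on `ℝ²` (represented as `Fin 2 → ℝ`). -/
noncomputable def norm2 (u : Fin 2 → ℝ) : ℝ := Real.sqrt (u 0 ^ 2 + u 1 ^ 2)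

section BDauxSection
open Set Real


namespace BDaux

noncomputable def ang (q : Fin 2 → ℝ) : ℝ := Complex.arg ⟨q 0, q 1⟩

/-- cos/sin of the angle of a point on the circle. -/
lemma sq_add_sq {q : Fin 2 → ℝ} (h : norm2 q = 1) : q 0 ^ 2 + q 1 ^ 2 = 1 := by
  have h0 : 0 ≤ q 0 ^ 2 + q 1 ^ 2 := by positivity
  have := Real.sq_sqrt h0
  unfold norm2 at h
  rw [h] at this
  linarith

lemma cos_sin_ang {q : Fin 2 → ℝ} (h : norm2 q = 1) :
    Real.cos (ang q) = q 0 ∧ Real.sin (ang q) = q 1 := by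
  have hsq := sq_add_sq h
  have habs : ‖(⟨q 0, q 1⟩ : ℂ)‖ = 1 := by
    rw [Complex.norm_def, Complex.normSq_mk]
    rw [show q 0 * q 0 + q 1 * q 1 = q 0 ^ 2 + q 1 ^ 2 by ring, hsq, Real.sqrt_one]
  have hne : (⟨q 0, q 1⟩ : ℂ) ≠ 0 := by
    intro h0; rw [h0] at habs; simp at habs
  constructor
  · have := Complex.cos_arg hne
    rw [habs] at this; simpa [ang] using this
  · have := Complex.sin_arg (⟨q 0, q 1⟩ : ℂ)
    rw [habs] at this; simpa [ang] using this

/-- The dot product with direction (cos t, sin t). -/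
noncomputable def ct (t : ℝ) (q : Fin 2 → ℝ) : ℝ := Real.cos (t - ang q)

lemma ct_eq (t : ℝ) {q : Fin 2 → ℝ} (h : norm2 q = 1) :
    ct t q = Real.cos t * q 0 + Real.sin t * q 1 := by
  obtain ⟨h1, h2⟩ := cos_sin_ang h
  rw [ct, Real.cos_sub, h1, h2]

lemma ct_add_pi (t : ℝ) (q : Fin 2 → ℝ) : ct (t + π) q = -ct t q := by
  rw [ct, ct, show t + π - ang q = (t - ang q) + π by ring, Real.cos_add_pi]

/-- If the angles differ by an integer multiple of π, the points agree up to sign. -/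
lemma eq_or_eq_neg {q q' : Fin 2 → ℝ} (hq : norm2 q = 1) (hq' : norm2 q' = 1)
    {m : ℤ} (h : ang q' = ang q + m * π) : q' = q ∨ q' = -q := by
  obtain ⟨hc, hs⟩ := cos_sin_ang hq
  obtain ⟨hc', hs'⟩ := cos_sin_ang hq'
  rcases Int.even_or_odd m with ⟨c, hcm⟩ | ⟨c, hcm⟩
  · left
    have hang : ang q' = ang q + c * (2 * π) := by
      rw [h, hcm]; push_cast; ring
    funext i
    fin_cases i
    · show q' 0 = q 0
      rw [← hc', ← hc, hang, Real.cos_add_int_mul_two_pi]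
    · show q' 1 = q 1
      rw [← hs', ← hs, hang, Real.sin_add_int_mul_two_pi]
  · right
    have hang : ang q' = (ang q + π) + c * (2 * π) := by
      rw [h, hcm]; push_cast; ring
    funext i
    fin_cases i
    · show q' 0 = -(q 0)
      rw [← hc', ← hc, hang, Real.cos_add_int_mul_two_pi, Real.cos_add_pi]
    · show q' 1 = -(q 1)
      rw [← hs', ← hs, hang, Real.sin_add_int_mul_two_pi, Real.sin_add_pi]

/-- At most one non-antipodal circle point has a zero at a given time. -/
lemma unique_zero {q q' : Fin 2 → ℝ} (hq : norm2 q = 1) (hq' : norm2 q' = 1)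
    (hno : q' ≠ -q) {t : ℝ} (h1 : ct t q = 0) (h2 : ct t q' = 0) : q = q' := by
  rw [ct, Real.cos_eq_zero_iff] at h1 h2
  obtain ⟨k, hk⟩ := h1
  obtain ⟨k', hk'⟩ := h2
  have : ang q' = ang q + ((k - k' : ℤ) : ℝ) * π := by push_cast; linarith
  rcases eq_or_eq_neg hq hq' this with h | h
  · exact h.symm
  · exact absurd h hno

/-- Zeros of a fixed point in an interval of length ≤ π form a subsingleton. -/
lemma zero_subsingleton (q : Fin 2 → ℝ) (a b : ℝ) (hab : b - a ≤ π) :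
    ({t ∈ Ioo a b | ct t q = 0}).Subsingleton := by
  intro x hx y hy
  obtain ⟨hx1, hx2⟩ := hx
  obtain ⟨hy1, hy2⟩ := hy
  rw [ct, Real.cos_eq_zero_iff] at hx2 hy2
  obtain ⟨k, hk⟩ := hx2
  obtain ⟨m, hm⟩ := hy2
  have hxy : x - y = (k - m) * π := by linarith
  have hpi : (0:ℝ) < π := Real.pi_pos
  have habs : |x - y| < π := by
    rw [abs_lt]
    constructor <;> [skip; skip] <;>
    · simp only [mem_Ioo] at *
      cases hx1; cases hy1; linarith
  rw [hxy, abs_mul, abs_of_pos hpi] at habs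
  have : |(k : ℝ) - m| < 1 := by
    by_contra hcon
    push_neg at hcon
    nlinarith
  have hkm : k = m := by
    have h2 : |((k - m : ℤ) : ℝ)| < 1 := by push_cast; exact this
    have h3 : |(k - m : ℤ)| < 1 := by exact_mod_cast h2
    rw [abs_lt] at h3
    omega
  rw [hkm] at hxy
  simp at hxy
  linarith

/-- Sign constancy on intervals without zeros. -/
lemma sign_const {q : Fin 2 → ℝ} {s s' : ℝ} (hss : s ≤ s')
    (hz : ∀ z ∈ Icc s s', ct z q ≠ 0) : (0 < ct s q ↔ 0 < ct s' q) := by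
  have hcont : ContinuousOn (fun t => ct t q) (Icc s s') :=
    (Real.continuous_cos.comp (continuous_id.sub continuous_const)).continuousOn
  have key : ∀ u v : ℝ, u ∈ Icc s s' → v ∈ Icc s s' → u ≤ v → 0 < ct u q → ¬(ct v q < 0) := by
    intro u v hu hv huv hpos hneg
    have hsub : Icc u v ⊆ Icc s s' := Icc_subset_Icc hu.1 hv.2
    have := intermediate_value_Icc' huv (hcont.mono hsub)
    have h0 : (0:ℝ) ∈ Icc (ct v q) (ct u q) := ⟨le_of_lt hneg, le_of_lt hpos⟩
    obtain ⟨z, hz1, hz2⟩ := this h0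
    exact hz z (hsub hz1) hz2
  constructor
  · intro h
    rcases lt_trichotomy (ct s' q) 0 with hlt | heq | hgt
    · exact absurd hlt (key s s' ⟨le_refl s, hss⟩ ⟨hss, le_refl s'⟩ hss h)
    · exact absurd heq (hz s' ⟨hss, le_refl s'⟩)
    · exact hgt
  · intro h
    rcases lt_trichotomy (ct s q) 0 with hlt | heq | hgt
    · exfalso
      have hsub : Icc s s' ⊆ Icc s s' := subset_rfl
      have := intermediate_value_Icc hss hcont
      have h0 : (0:ℝ) ∈ Icc (ct s q) (ct s' q) := ⟨le_of_lt hlt, le_of_lt h⟩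
      obtain ⟨z, hz1, hz2⟩ := this h0
      exact hz z hz1 hz2
    · exact absurd heq (hz s ⟨le_refl s, hss⟩)
    · exact hgt

/-- Counting: filtered sets agreeing away from one point have close cardinality. -/
lemma ncard_close {α : Type*} {A : Set α} (hA : A.Finite) {p p' : α → Prop} {q0 : α}
    (h : ∀ a ∈ A, a ≠ q0 → (p a ↔ p' a)) :
    |({a ∈ A | p' a}.ncard : ℤ) - ({a ∈ A | p a}.ncard : ℤ)| ≤ 1 := by
  set S := {a ∈ A | p a}
  set S' := {a ∈ A | p' a}
  have hS : S.Finite := hA.subset (sep_subset _ _)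
  have hS' : S'.Finite := hA.subset (sep_subset _ _)
  have h1 : S ⊆ S' ∪ {q0} := by
    intro a ⟨haA, hap⟩
    by_cases haq : a = q0
    · exact Or.inr (by simp [haq])
    · exact Or.inl ⟨haA, (h a haA haq).1 hap⟩
  have h2 : S' ⊆ S ∪ {q0} := by
    intro a ⟨haA, hap⟩
    by_cases haq : a = q0
    · exact Or.inr (by simp [haq])
    · exact Or.inl ⟨haA, (h a haA haq).2 hap⟩
  have c1 : S.ncard ≤ S'.ncard + 1 :=
    le_trans (ncard_le_ncard h1 (hS'.union (finite_singleton _)))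
      (le_trans (ncard_union_le _ _) (by simp))
  have c2 : S'.ncard ≤ S.ncard + 1 :=
    le_trans (ncard_le_ncard h2 (hS.union (finite_singleton _)))
      (le_trans (ncard_union_le _ _) (by simp))
  have c1' : (S.ncard : ℤ) ≤ (S'.ncard : ℤ) + 1 := by exact_mod_cast c1
  have c2' : (S'.ncard : ℤ) ≤ (S.ncard : ℤ) + 1 := by exact_mod_cast c2
  rw [abs_sub_le_iff]
  constructor <;> linarith

lemma ncard_eq_of_iff {α : Type*} {A : Set α} {p p' : α → Prop}
    (h : ∀ a ∈ A, (p a ↔ p' a)) : {a ∈ A | p a}.ncard = {a ∈ A | p' a}.ncard := by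
  congr 1
  ext a
  exact ⟨fun ⟨h1, h2⟩ => ⟨h1, (h a h1).1 h2⟩, fun ⟨h1, h2⟩ => ⟨h1, (h a h1).2 h2⟩⟩



lemma sweep_aux (f : ℝ → ℤ) (t0 t1 : ℝ) (Bad : Set ℝ) (hfin : Bad.Finite)
    (hBadsub : Bad ⊆ Ioo t0 t1)
    (hstep : ∀ s s', t0 ≤ s → s < s' → s' ≤ t1 → s ∉ Bad → s' ∉ Bad →
      (Bad ∩ Ioo s s').Subsingleton → |f s' - f s| ≤ 1)
    (h1 : 0 ≤ f t1) :
    ∀ n : ℕ, ∀ s : ℝ, t0 ≤ s → s < t1 → s ∉ Bad → (Bad ∩ Ioo s t1).ncard ≤ n →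
      f s ≤ 0 → ∃ t, t ∈ Icc t0 t1 ∧ t ∉ Bad ∧ f t = 0 := by
  have ht1Bad : t1 ∉ Bad := fun h => absurd (hBadsub h).2 (lt_irrefl t1)
  intro n
  induction n with
  | zero =>
    intro s hs0 hs1 hsB hcard hfs
    rcases eq_or_lt_of_le hfs with hfs0 | hfsneg
    · exact ⟨s, ⟨hs0, le_of_lt hs1⟩, hsB, hfs0⟩
    have hE : Bad ∩ Ioo s t1 = ∅ := by
      have : (Bad ∩ Ioo s t1).Finite := hfin.inter_of_left _
      exact (ncard_eq_zero this).mp (Nat.le_zero.mp hcard)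
    have hsub : (Bad ∩ Ioo s t1).Subsingleton := by rw [hE]; exact subsingleton_empty
    have := hstep s t1 hs0 hs1 le_rfl hsB ht1Bad hsub
    rw [abs_sub_le_iff] at this
    have : f t1 = 0 := by omega
    exact ⟨t1, ⟨le_of_lt (lt_of_le_of_lt hs0 hs1), le_rfl⟩, ht1Bad, this⟩
  | succ n ih =>
    intro s hs0 hs1 hsB hcard hfs
    rcases eq_or_lt_of_le hfs with hfs0 | hfsneg
    · exact ⟨s, ⟨hs0, le_of_lt hs1⟩, hsB, hfs0⟩
    set E := Bad ∩ Ioo s t1 with hEdef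
    have hEfin : E.Finite := hfin.inter_of_left _
    rcases eq_empty_or_nonempty E with hE | hEne
    · -- no bad points: one step to t1
      have hsub : E.Subsingleton := by rw [hE]; exact subsingleton_empty
      have := hstep s t1 hs0 hs1 le_rfl hsB ht1Bad hsub
      rw [abs_sub_le_iff] at this
      have : f t1 = 0 := by omega
      exact ⟨t1, ⟨le_of_lt (lt_of_le_of_lt hs0 hs1), le_rfl⟩, ht1Bad, this⟩
    · -- take the least bad point b
      obtain ⟨b, hbE, hbmin'⟩ := Set.exists_min_image E id hEfin hEne
      have hbs : s < b := hbE.2.1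
      have hbt1 : b < t1 := hbE.2.2
      -- next bad point after b, or t1
      set E' := Bad ∩ Ioo b t1 with hE'def
      have hE'fin : E'.Finite := hfin.inter_of_left _
      have hcE' : ∃ c, b < c ∧ c ≤ t1 ∧ ∀ x ∈ E', c ≤ x := by
        rcases eq_empty_or_nonempty E' with h | h
        · exact ⟨t1, hbt1, le_rfl, fun x hx => by rw [h] at hx; exact absurd hx (notMem_empty x)⟩
        · obtain ⟨c, hcE, hcmin⟩ := Set.exists_min_image E' id hE'fin h
          exact ⟨c, hcE.2.1, le_of_lt hcE.2.2, hcmin⟩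
      obtain ⟨c, hbc, hct1, hcmin⟩ := hcE'
      set s' := (b + c) / 2 with hs'def
      have hbs' : b < s' := by rw [hs'def]; linarith
      have hs'c : s' < c := by rw [hs'def]; linarith
      have hs'0 : t0 ≤ s' := le_of_lt (lt_of_le_of_lt hs0 (lt_trans hbs hbs'))
      have hs't1 : s' < t1 := lt_of_lt_of_le hs'c hct1
      have hs'B : s' ∉ Bad := by
        intro hmem
        have hs'E' : s' ∈ E' := ⟨hmem, hbs', hs't1⟩
        exact absurd (hcmin s' hs'E') (not_le.mpr hs'c)
      -- Bad ∩ Ioo s s' ⊆ {b}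
      have hsub : (Bad ∩ Ioo s s').Subsingleton := by
        have hsb : Bad ∩ Ioo s s' ⊆ {b} := by
          intro x ⟨hxB, hx1, hx2⟩
          have hxE : x ∈ E := ⟨hxB, hx1, lt_trans hx2 hs't1⟩
          have hbx : b ≤ x := hbmin' x hxE
          rcases eq_or_lt_of_le hbx with h | h
          · exact h.symm
          · exact absurd (hcmin x ⟨hxB, h, lt_trans hx2 hs't1⟩) (not_le.mpr (lt_trans hx2 hs'c))
        exact subsingleton_singleton.anti hsb
      have hss' : s < s' := lt_trans hbs hbs'
      have hstep1 := hstep s s' hs0 hss' (le_of_lt hs't1) hsB hs'B hsub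
      rw [abs_sub_le_iff] at hstep1
      have hfs' : f s' ≤ 0 := by omega
      -- cardinality decreases
      have hsubset : Bad ∩ Ioo s' t1 ⊆ E \ {b} := by
        intro x ⟨hxB, hx1, hx2⟩
        refine ⟨⟨hxB, lt_trans hss' hx1, hx2⟩, ?_⟩
        intro hxb
        rw [mem_singleton_iff] at hxb
        rw [hxb] at hx1
        exact absurd hx1 (not_lt.mpr (le_of_lt hbs'))
      have hcard' : (Bad ∩ Ioo s' t1).ncard ≤ n := by
        have h1' : (Bad ∩ Ioo s' t1).ncard ≤ (E \ {b}).ncard :=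
          ncard_le_ncard hsubset (hEfin.diff)
        have h2' : (E \ {b}).ncard = E.ncard - 1 := ncard_diff_singleton_of_mem hbE
        have h3' : 1 ≤ E.ncard := ncard_pos hEfin |>.mpr ⟨b, hbE⟩
        omega
      exact ih s' hs'0 hs't1 hs'B hcard' hfs'

lemma sweep (f : ℝ → ℤ) (t0 t1 : ℝ) (Bad : Set ℝ) (hfin : Bad.Finite)
    (hBadsub : Bad ⊆ Ioo t0 t1)
    (hstep : ∀ s s', t0 ≤ s → s < s' → s' ≤ t1 → s ∉ Bad → s' ∉ Bad →
      (Bad ∩ Ioo s s').Subsingleton → |f s' - f s| ≤ 1)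
    (ht : t0 < t1) (h0 : f t0 ≤ 0) (h1 : 0 ≤ f t1) :
    ∃ t, t ∈ Icc t0 t1 ∧ t ∉ Bad ∧ f t = 0 := by
  have ht0Bad : t0 ∉ Bad := fun h => absurd (hBadsub h).1 (lt_irrefl t0)
  exact sweep_aux f t0 t1 Bad hfin hBadsub hstep h1 Bad.ncard t0 le_rfl ht ht0Bad
    (ncard_le_ncard (inter_subset_left) hfin) h0


end BDaux

end BDauxSection

open Set Real BDaux

/-- Balanced diameter for mode switching on the circle: if `A` and `B` are finite subsets of
the unit circle in `ℝ²` with `|A| = |B| = N ≥ 1`, all points of `A ∪ B` pairwise distinct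
and no two of them antipodal, then there is a unit vector `u` with `⟨u, q⟩ ≠ 0` for every
`q ∈ A ∪ B` such that the number of `a ∈ A` with `⟨u, a⟩ > 0` equals the number of `b ∈ B`
with `⟨u, b⟩ > 0`. -/
theorem balanced_diameter (N : ℕ) (hN : 1 ≤ N) (A B : Set (Fin 2 → ℝ))
    (hAfin : A.Finite) (hBfin : B.Finite)
    (hAcirc : ∀ a ∈ A, norm2 a = 1) (hBcirc : ∀ b ∈ B, norm2 b = 1)
    (hAcard : A.ncard = N) (hBcard : B.ncard = N)
    (hdisj : Disjoint A B)
    (hanti : ∀ q ∈ A ∪ B, ∀ q' ∈ A ∪ B, q' ≠ -q) :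
    ∃ u : Fin 2 → ℝ, norm2 u = 1 ∧
      (∀ q ∈ A ∪ B, u ⬝ᵥ q ≠ 0) ∧
      {a ∈ A | 0 < u ⬝ᵥ a}.ncard = {b ∈ B | 0 < u ⬝ᵥ b}.ncard := by
  set Q : Set (Fin 2 → ℝ) := A ∪ B with hQdef
  have hQfin : Q.Finite := hAfin.union hBfin
  have hQcirc : ∀ q ∈ Q, norm2 q = 1 := by
    rintro q (hq | hq)
    · exact hAcirc q hq
    · exact hBcirc q hq
  have hpi : (0:ℝ) < π := Real.pi_pos
  -- uniqueness of the zero point at a given time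
  have huniq : ∀ q ∈ Q, ∀ q' ∈ Q, ∀ t : ℝ, ct t q = 0 → ct t q' = 0 → q = q' :=
    fun q hq q' hq' t h1 h2 =>
      unique_zero (hQcirc q hq) (hQcirc q' hq') (hanti q hq q' hq') h1 h2
  -- counting function
  set f : ℝ → ℤ := fun t =>
    ({a ∈ A | 0 < ct t a}.ncard : ℤ) - ({b ∈ B | 0 < ct t b}.ncard : ℤ) with hfdef
  -- flip identity
  have hAle : ∀ t, {a ∈ A | 0 < ct t a}.ncard ≤ N := fun t =>
    hAcard ▸ ncard_le_ncard (sep_subset _ _) hAfin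
  have hBle : ∀ t, {b ∈ B | 0 < ct t b}.ncard ≤ N := fun t =>
    hBcard ▸ ncard_le_ncard (sep_subset _ _) hBfin
  have hflip : ∀ t : ℝ, (∀ q ∈ Q, ct t q ≠ 0) → f (t + π) = -f t := by
    intro t hgood
    have hA : {a ∈ A | 0 < ct (t + π) a} = A \ {a ∈ A | 0 < ct t a} := by
      ext a
      simp only [mem_sep_iff, mem_diff, ct_add_pi]
      constructor
      · rintro ⟨haA, hpos⟩
        exact ⟨haA, fun ⟨_, hpos'⟩ => by linarith⟩
      · rintro ⟨haA, hneg⟩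
        refine ⟨haA, ?_⟩
        have hne := hgood a (Or.inl haA)
        rcases lt_trichotomy (ct t a) 0 with h | h | h
        · linarith
        · exact absurd h hne
        · exact absurd ⟨haA, h⟩ hneg
    have hB : {b ∈ B | 0 < ct (t + π) b} = B \ {b ∈ B | 0 < ct t b} := by
      ext b
      simp only [mem_sep_iff, mem_diff, ct_add_pi]
      constructor
      · rintro ⟨hbB, hpos⟩
        exact ⟨hbB, fun ⟨_, hpos'⟩ => by linarith⟩
      · rintro ⟨hbB, hneg⟩
        refine ⟨hbB, ?_⟩
        have hne := hgood b (Or.inr hbB)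
        rcases lt_trichotomy (ct t b) 0 with h | h | h
        · linarith
        · exact absurd h hne
        · exact absurd ⟨hbB, h⟩ hneg
    have hA' : (({a ∈ A | 0 < ct (t + π) a}).ncard : ℤ)
        = (N : ℤ) - ({a ∈ A | 0 < ct t a}).ncard := by
      rw [hA, cast_ncard_sdiff (sep_subset _ _) hAfin, hAcard]
    have hB' : (({b ∈ B | 0 < ct (t + π) b}).ncard : ℤ)
        = (N : ℤ) - ({b ∈ B | 0 < ct t b}).ncard := by
      rw [hB, cast_ncard_sdiff (sep_subset _ _) hBfin, hBcard]
    simp only [hfdef, hA', hB']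
    ring
  have hgoodflip : ∀ t : ℝ, (∀ q ∈ Q, ct t q ≠ 0) → (∀ q ∈ Q, ct (t + π) q ≠ 0) := by
    intro t hgood q hq
    rw [ct_add_pi]
    exact neg_ne_zero.mpr (hgood q hq)
  -- existence of a good starting time
  have hgood_ex : ∃ t : ℝ, ∀ q ∈ Q, ct t q ≠ 0 := by
    set Z : Set ℝ := ⋃ q ∈ Q, {t : ℝ | ct t q = 0} with hZdef
    have hZc : Z.Countable := by
      refine Countable.biUnion hQfin.countable (fun q _ => ?_)
      have : {t : ℝ | ct t q = 0} ⊆ range (fun k : ℤ => (2 * (k:ℝ) + 1) * π / 2 + ang q) := by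
        intro t ht
        rw [mem_setOf_eq, ct, Real.cos_eq_zero_iff] at ht
        obtain ⟨k, hk⟩ := ht
        exact ⟨k, by simp; linarith⟩
      exact (countable_range _).mono this
    have : Z ≠ univ := by
      intro h
      exact Cardinal.not_countable_real (h ▸ hZc)
    obtain ⟨t, ht⟩ := (ne_univ_iff_exists_notMem Z).mp this
    refine ⟨t, fun q hq hzero => ht ?_⟩
    exact mem_biUnion hq hzero
  obtain ⟨t0, ht0⟩ := hgood_ex
  -- choose starting point with f ≤ 0
  have hmain : ∀ τ : ℝ, (∀ q ∈ Q, ct τ q ≠ 0) → f τ ≤ 0 →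
      ∃ t : ℝ, (∀ q ∈ Q, ct t q ≠ 0) ∧ f t = 0 := by
    intro τ hτgood hfτ
    have hτ'good := hgoodflip τ hτgood
    set Bad : Set ℝ := {x ∈ Ioo τ (τ + π) | ∃ q ∈ Q, ct x q = 0} with hBaddef
    have hBadfin : Bad.Finite := by
      have hsub : Bad ⊆ ⋃ q ∈ Q, {x ∈ Ioo τ (τ + π) | ct x q = 0} := by
        rintro x ⟨hx1, q, hq, hx2⟩
        exact mem_biUnion hq ⟨hx1, hx2⟩
      exact (Finite.biUnion hQfin (fun q _ =>
        (zero_subsingleton q τ (τ + π) (by linarith)).finite)).subset hsub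
    have hBadsub : Bad ⊆ Ioo τ (τ + π) := fun x hx => hx.1
    -- goodness of non-bad points in the closed interval
    have hgood_of : ∀ x, x ∈ Icc τ (τ + π) → x ∉ Bad → ∀ q ∈ Q, ct x q ≠ 0 := by
      intro x hx hxB q hq hzero
      rcases eq_or_lt_of_le hx.1 with h | h
      · exact hτgood q hq (h ▸ hzero)
      rcases eq_or_lt_of_le hx.2 with h' | h'
      · exact hτ'good q hq (h' ▸ hzero)
      exact hxB ⟨⟨h, h'⟩, q, hq, hzero⟩
    -- step lemma
    have hstep : ∀ s s', τ ≤ s → s < s' → s' ≤ τ + π → s ∉ Bad → s' ∉ Bad →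
        (Bad ∩ Ioo s s').Subsingleton → |f s' - f s| ≤ 1 := by
      intro s s' hs0 hss' hs'1 hsB hs'B hsub
      have hsgood : ∀ q ∈ Q, ct s q ≠ 0 :=
        hgood_of s ⟨hs0, le_of_lt (lt_of_lt_of_le hss' hs'1)⟩ hsB
      have hs'good : ∀ q ∈ Q, ct s' q ≠ 0 :=
        hgood_of s' ⟨le_of_lt (lt_of_le_of_lt hs0 hss'), hs'1⟩ hs'B
      -- zeros in [s, s'] lie in Bad ∩ Ioo s s'
      have hzbad : ∀ q ∈ Q, ∀ z ∈ Icc s s', ct z q = 0 → z ∈ Bad ∩ Ioo s s' := by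
        intro q hq z hz hzero
        have hz1 : s < z := by
          rcases eq_or_lt_of_le hz.1 with h | h
          · exact absurd (h ▸ hzero) (hsgood q hq)
          · exact h
        have hz2 : z < s' := by
          rcases eq_or_lt_of_le hz.2 with h | h
          · exact absurd (h ▸ hzero) (hs'good q hq)
          · exact h
        exact ⟨⟨⟨lt_of_le_of_lt hs0 hz1, lt_of_lt_of_le hz2 hs'1⟩, q, hq, hzero⟩, hz1, hz2⟩
      by_cases hP : ∃ q0 ∈ Q, ∃ z ∈ Icc s s', ct z q0 = 0
      · obtain ⟨q0, hq0Q, z0, hz0, hz0zero⟩ := hP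
        -- every other point has constant sign
        have hconst : ∀ q ∈ Q, q ≠ q0 → (0 < ct s q ↔ 0 < ct s' q) := by
          intro q hq hne
          refine sign_const (le_of_lt hss') (fun z hz hzero => ?_)
          have h1 := hzbad q hq z hz hzero
          have h2 := hzbad q0 hq0Q z0 hz0 hz0zero
          have : z = z0 := hsub h1 h2
          exact hne (huniq q hq q0 hq0Q z hzero (this ▸ hz0zero))
        rcases hq0Q with hq0A | hq0B
        · -- q0 ∈ A : B-count unchanged
          have hBeq : {b ∈ B | 0 < ct s b}.ncard = {b ∈ B | 0 < ct s' b}.ncard :=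
            ncard_eq_of_iff (fun b hb => hconst b (Or.inr hb)
              (fun h => absurd hq0A (disjoint_left.mp hdisj.symm (h ▸ hb))))
          have hAcl := ncard_close hAfin (q0 := q0)
            (fun a ha hne => hconst a (Or.inl ha) hne)
          simp only [hfdef]
          rw [← hBeq]
          calc |({a ∈ A | 0 < ct s' a}.ncard : ℤ) - {b ∈ B | 0 < ct s b}.ncard -
                (({a ∈ A | 0 < ct s a}.ncard : ℤ) - {b ∈ B | 0 < ct s b}.ncard)|
              = |({a ∈ A | 0 < ct s' a}.ncard : ℤ) - ({a ∈ A | 0 < ct s a}.ncard : ℤ)| := by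
                ring_nf
            _ ≤ 1 := hAcl
        · -- q0 ∈ B : A-count unchanged
          have hAeq : {a ∈ A | 0 < ct s a}.ncard = {a ∈ A | 0 < ct s' a}.ncard :=
            ncard_eq_of_iff (fun a ha => hconst a (Or.inl ha)
              (fun h => absurd hq0B (disjoint_left.mp hdisj (h ▸ ha))))
          have hBcl := ncard_close hBfin (q0 := q0)
            (fun b hb hne => hconst b (Or.inr hb) hne)
          simp only [hfdef]
          rw [← hAeq]
          calc |({a ∈ A | 0 < ct s a}.ncard : ℤ) - {b ∈ B | 0 < ct s' b}.ncard -
                (({a ∈ A | 0 < ct s a}.ncard : ℤ) - {b ∈ B | 0 < ct s b}.ncard)|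
              = |({b ∈ B | 0 < ct s' b}.ncard : ℤ) - ({b ∈ B | 0 < ct s b}.ncard : ℤ)| := by
                rw [show ({a ∈ A | 0 < ct s a}.ncard : ℤ) - {b ∈ B | 0 < ct s' b}.ncard -
                  (({a ∈ A | 0 < ct s a}.ncard : ℤ) - {b ∈ B | 0 < ct s b}.ncard)
                  = -(({b ∈ B | 0 < ct s' b}.ncard : ℤ) - {b ∈ B | 0 < ct s b}.ncard) by ring,
                  abs_neg]
            _ ≤ 1 := hBcl
      · -- no zeros at all: f constant
        push_neg at hP
        have hconst : ∀ q ∈ Q, (0 < ct s q ↔ 0 < ct s' q) := by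
          intro q hq
          exact sign_const (le_of_lt hss') (fun z hz hzero => hP q hq z hz hzero)
        have hAeq : {a ∈ A | 0 < ct s a}.ncard = {a ∈ A | 0 < ct s' a}.ncard :=
          ncard_eq_of_iff (fun a ha => hconst a (Or.inl ha))
        have hBeq : {b ∈ B | 0 < ct s b}.ncard = {b ∈ B | 0 < ct s' b}.ncard :=
          ncard_eq_of_iff (fun b hb => hconst b (Or.inr hb))
        simp only [hfdef, hAeq, hBeq]
        simp
    have hend : 0 ≤ f (τ + π) := by
      rw [hflip τ hτgood]
      omega
    obtain ⟨t, htIcc, htB, htf⟩ := sweep f τ (τ + π) Bad hBadfin hBadsub hstep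
      (by linarith) hfτ hend
    exact ⟨t, hgood_of t htIcc htB, htf⟩
  -- apply at t0 or t0 + π
  have hkey : ∃ t : ℝ, (∀ q ∈ Q, ct t q ≠ 0) ∧ f t = 0 := by
    rcases le_or_gt (f t0) 0 with h | h
    · exact hmain t0 ht0 h
    · refine hmain (t0 + π) (hgoodflip t0 ht0) ?_
      rw [hflip t0 ht0]
      omega
  obtain ⟨t, htgood, htf⟩ := hkey
  -- construct u
  refine ⟨![Real.cos t, Real.sin t], ?_, ?_, ?_⟩
  · unfold norm2
    simp only [cons_val_zero, cons_val_one, head_cons]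
    rw [Real.cos_sq_add_sin_sq, Real.sqrt_one]
  · intro q hq
    have : (![Real.cos t, Real.sin t]) ⬝ᵥ q = ct t q := by
      rw [ct_eq t (hQcirc q hq)]
      simp [dotProduct, Fin.sum_univ_two]
    rw [this]
    exact htgood q hq
  · have hdot : ∀ q ∈ Q, (![Real.cos t, Real.sin t]) ⬝ᵥ q = ct t q := by
      intro q hq
      rw [ct_eq t (hQcirc q hq)]
      simp [dotProduct, Fin.sum_univ_two]
    have hAset : {a ∈ A | 0 < (![Real.cos t, Real.sin t]) ⬝ᵥ a} = {a ∈ A | 0 < ct t a} := by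
      ext a
      simp only [mem_sep_iff]
      exact ⟨fun ⟨h1, h2⟩ => ⟨h1, (hdot a (Or.inl h1)) ▸ h2⟩,
        fun ⟨h1, h2⟩ => ⟨h1, (hdot a (Or.inl h1)).symm ▸ h2⟩⟩
    have hBset : {b ∈ B | 0 < (![Real.cos t, Real.sin t]) ⬝ᵥ b} = {b ∈ B | 0 < ct t b} := by
      ext b
      simp only [mem_sep_iff]
      exact ⟨fun ⟨h1, h2⟩ => ⟨h1, (hdot b (Or.inr h1)) ▸ h2⟩,
        fun ⟨h1, h2⟩ => ⟨h1, (hdot b (Or.inr h1)).symm ▸ h2⟩⟩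
    rw [hAset, hBset]
    simp only [hfdef] at htf
    omega
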